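/- Let p be a prime and n = a_0 + a_1 p + ⋯ + a_k p^k the base-p expansion of n. Then a Sylow p-subgroup of S_n has exactly a_i orbits of size p^i on {1,...,n} for each i = 0,...,k, and no other orbits. -/

import Mathlib

open Nat

lemma getD_digits_ofDigits {p : ℕ} (hp : 1 < p) :
    ∀ (L : List ℕ), (∀ x ∈ L, x < p) → ∀ i,
      (Nat.digits p (Nat.ofDigits p L)).getD i 0 = L.getD i 0 := by
  intro L
  induction L with
  | nil => simp
  | cons a L IH =>
    intro hL i
    have ha : a < p := hL a List.mem_cons_self
    have IH' := IH (fun x hx => hL x (List.mem_cons_of_mem a hx))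
    rw [Nat.ofDigits_cons]
    by_cases h0 : a = 0 ∧ Nat.ofDigits p L = 0
    · obtain ⟨rfl, h2⟩ := h0
      rw [h2]
      simp only [Nat.mul_zero, Nat.add_zero, Nat.cast_zero, Nat.digits_zero]
      cases i with
      | zero => simp
      | succ i => have := IH' i; rw [h2] at this; simpa using this
    · have hne : a ≠ 0 ∨ Nat.ofDigits p L ≠ 0 := by tauto
      rw [Nat.digits_add p hp a _ ha hne]
      cases i with
      | zero => simp
      | succ i => simpa using IH' i

lemma sum_range_getD (l : List ℕ) : ∀ {B}, l.length ≤ B →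
    ∑ i ∈ Finset.range B, l.getD i 0 = l.sum := by
  induction l with
  | nil => intro B _; simp
  | cons a l IH =>
    intro B hB
    cases B with
    | zero => simp at hB
    | succ B =>
      rw [Finset.sum_range_succ']
      simp only [List.getD_cons_succ, List.getD_cons_zero, List.sum_cons]
      rw [IH (by simpa using hB), Nat.add_comm]

lemma ofDigits_range_map {p : ℕ} (c : ℕ → ℕ) :
    ∀ B, Nat.ofDigits p ((List.range B).map c) = ∑ i ∈ Finset.range B, c i * p ^ i := by
  intro B
  induction B with
  | zero => simp
  | succ B IH =>
    rw [List.range_succ, List.map_append, Nat.ofDigits_append, IH, Finset.sum_range_succ]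
    simp [Nat.ofDigits_singleton, Nat.mul_comm]

lemma key_multiset {p : ℕ} (hp : p.Prime) :
    ∀ N (E : Multiset ℕ), Multiset.card E = N →
      (Nat.digits p ((E.map (p ^ ·)).sum)).sum ≤ Multiset.card E ∧
      (Multiset.card E ≤ (Nat.digits p ((E.map (p ^ ·)).sum)).sum →
        ∀ i, E.count i = (Nat.digits p ((E.map (p ^ ·)).sum)).getD i 0) := by
  intro N
  induction N using Nat.strong_induction_on with
  | _ N IH =>
    intro E hcard
    by_cases hc : ∀ j, E.count j < p
    · -- no carries needed: counts are the digits
      set n := (E.map (p ^ ·)).sum with hn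
      set B := E.sum + 1 with hB
      have hmem : ∀ j ∈ E, j < B := fun j hj =>
        Nat.lt_succ_of_le (Multiset.single_le_sum (fun _ _ => Nat.zero_le _) _ hj)
      have hsub : E.toFinset ⊆ Finset.range B := fun j hj =>
        Finset.mem_range.mpr (hmem j (Multiset.mem_toFinset.mp hj))
      set L : List ℕ := (List.range B).map E.count with hL
      have hLlt : ∀ x ∈ L, x < p := by
        intro x hx
        obtain ⟨i, _, rfl⟩ := List.mem_map.mp hx
        exact hc i
      have hofd : Nat.ofDigits p L = n := by
        rw [hL, ofDigits_range_map, hn, Finset.sum_multiset_map_count]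
        refine (Finset.sum_subset hsub ?_).symm
        intro j _ hj
        simp [Multiset.count_eq_zero_of_notMem (fun h => hj (Multiset.mem_toFinset.mpr h))]
      have hgetD : ∀ i, (Nat.digits p n).getD i 0 = E.count i := by
        intro i
        rw [← hofd, getD_digits_ofDigits hp.one_lt L hLlt i]
        rcases Nat.lt_or_ge i B with h | h
        · rw [hL, List.getD_eq_getElem?_getD, List.getElem?_map, List.getElem?_range h]
          rfl
        · rw [hL, List.getD_eq_getElem?_getD, List.getElem?_map, List.getElem?_eq_none (by simpa using h)]
          have : i ∉ E := fun hmem' => absurd (hmem i hmem') (by omega)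
          simp [Multiset.count_eq_zero_of_notMem this]
      have hsum : (Nat.digits p n).sum = Multiset.card E := by
        set B' := max B (Nat.digits p n).length with hB'
        have h1 : ∑ i ∈ Finset.range B', (Nat.digits p n).getD i 0 = (Nat.digits p n).sum :=
          sum_range_getD _ (le_max_right _ _)
        have h2 : ∑ i ∈ Finset.range B', E.count i = Multiset.card E := by
          rw [← Multiset.toFinset_sum_count_eq E]
          refine (Finset.sum_subset (hsub.trans ?_) ?_).symm
          · exact Finset.range_subset_range.mpr (le_max_left _ _)
          · intro j _ hj
            exact Multiset.count_eq_zero_of_notMem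
              (fun h => hj (Multiset.mem_toFinset.mpr h))
        rw [← h1, ← h2]
        exact Finset.sum_congr rfl fun i _ => hgetD i
      exact ⟨hsum.le, fun _ i => (hgetD i).symm⟩
    · -- a carry is possible
      push_neg at hc
      obtain ⟨j, hj⟩ := hc
      have hle : Multiset.replicate p j ≤ E := by
        rw [Multiset.le_iff_count]
        intro i
        rw [Multiset.count_replicate]
        split
        · next h => subst h; exact hj
        · exact Nat.zero_le _
      set D := E - Multiset.replicate p j with hD
      have hED : E = D + Multiset.replicate p j := (tsub_add_cancel_of_le hle).symm
      set E' := (j + 1) ::ₘ D with hE'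
      have hsum_eq : (E'.map (p ^ ·)).sum = (E.map (p ^ ·)).sum := by
        rw [hED, hE']
        simp [Multiset.sum_replicate, pow_succ, Nat.mul_comm, Nat.add_comm]
      have hcards : Multiset.card E = Multiset.card D + p := by
        rw [hED]; simp
      have hcard' : Multiset.card E' = Multiset.card D + 1 := by simp [hE']
      have hlt : Multiset.card E' < N := by
        have := hp.two_le; omega
      have := (IH _ hlt E' rfl).1
      rw [hsum_eq] at this
      have h2p := hp.two_le
      exact ⟨by omega, fun habs => absurd habs (by omega)⟩

lemma digits_pow_sum {p : ℕ} (hp : p.Prime) : ∀ k, (Nat.digits p (p ^ k)).sum = 1 := by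
  intro k
  induction k with
  | zero =>
    simp [Nat.digits_of_lt p 1 one_ne_zero hp.one_lt]
  | succ k IH =>
    have h : p ^ (k + 1) = 0 + p * p ^ k := by ring
    rw [h, Nat.digits_add p hp.one_lt 0 (p ^ k) hp.pos
      (Or.inr (pow_ne_zero _ hp.pos.ne'))]
    simpa using IH

theorem sylow_orbit_sizes_base_p {n p : ℕ} (hn : 1 ≤ n) (hp : p.Prime)
    (P : Sylow p (Equiv.Perm (Fin n))) :
    (∀ ω : MulAction.orbitRel.Quotient (P : Subgroup (Equiv.Perm (Fin n))) (Fin n),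
        ∃ i : ℕ, Nat.card ω.orbit = p ^ i) ∧
    ∀ i : ℕ,
      Nat.card {ω : MulAction.orbitRel.Quotient (P : Subgroup (Equiv.Perm (Fin n))) (Fin n) //
          Nat.card ω.orbit = p ^ i} = (Nat.digits p n).getD i 0 := by
  classical
  haveI : Fact p.Prime := ⟨hp⟩
  set G := Equiv.Perm (Fin n) with hG
  set H : Subgroup G := (P : Subgroup G) with hH
  set Ω := MulAction.orbitRel.Quotient H (Fin n) with hΩ
  haveI : Fintype Ω := Fintype.ofFinite _
  set v := (n !).factorization p with hv
  -- cardinality of the Sylow subgroup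
  have hsyl : Nat.card H = p ^ v := by
    have h1 := Sylow.card_eq_multiplicity P
    have h2 : Nat.card G = n ! := by
      simp [hG, Nat.card_eq_fintype_card, Fintype.card_perm]
    rwa [h2] at h1
  -- each orbit has p-power size
  have hpow : ∀ ω : Ω, ∃ i : ℕ, Nat.card ω.orbit = p ^ i := by
    intro ω
    have h1 : Nat.card ω.orbit = Nat.card (H ⧸ MulAction.stabilizer H ω.out) := by
      rw [MulAction.orbitRel.Quotient.orbit_eq_orbit_out ω Quotient.out_eq']
      exact Nat.card_congr (MulAction.orbitEquivQuotientStabilizer H ω.out)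
    have h2 : Nat.card ω.orbit ∣ p ^ v := by
      rw [h1, ← hsyl]
      exact Subgroup.card_quotient_dvd_card _
    obtain ⟨i, _, hi⟩ := (Nat.dvd_prime_pow hp).mp h2
    exact ⟨i, hi⟩
  choose e he using hpow
  -- the orbit sizes sum to n
  have hsig : ∑ ω : Ω, Nat.card ω.orbit = n := by
    haveI : ∀ ω : Ω, Fintype ω.orbit := fun ω => Fintype.ofFinite _
    calc ∑ ω : Ω, Nat.card ω.orbit = Nat.card (Σ ω : Ω, ω.orbit) := by
          simp [Nat.card_eq_fintype_card]
      _ = Nat.card (Fin n) :=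
          (Nat.card_congr (MulAction.selfEquivSigmaOrbits' H (Fin n))).symm
      _ = n := by simp
  -- injective embedding into the product of permutation groups of the orbits
  set phi : H →* ∀ ω : Ω, Equiv.Perm ω.orbit :=
    Pi.monoidHom fun ω => MulAction.toPermHom H ω.orbit with hφdef2
  have hφ : Function.Injective phi := by
    rw [injective_iff_map_eq_one]
    intro g hg
    have hfix : ∀ x : Fin n, g • x = x := by
      intro x
      have hx : x ∈ MulAction.orbitRel.Quotient.orbit (Quotient.mk'' x : Ω) :=
        MulAction.orbitRel.Quotient.mem_orbit.mpr rfl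
      have h1 := congrFun hg (Quotient.mk'' x)
      have h2 := congrArg (fun (π : Equiv.Perm
        (MulAction.orbitRel.Quotient.orbit (Quotient.mk'' x : Ω))) =>
        (π ⟨x, hx⟩ : Fin n)) h1
      exact h2
    refine Subtype.ext (Equiv.ext fun x => ?_)
    exact hfix x
  have hdvd : Nat.card H ∣ ∏ ω : Ω, (Nat.card ω.orbit)! := by
    have h1 := Subgroup.card_dvd_of_injective phi hφ
    have h2 : Nat.card (∀ ω : Ω, Equiv.Perm ω.orbit) = ∏ ω : Ω, (Nat.card ω.orbit)! := by
      rw [Nat.card_pi]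
      refine Finset.prod_congr rfl fun ω _ => ?_
      haveI : Fintype ω.orbit := Fintype.ofFinite _
      rw [Nat.card_eq_fintype_card, Nat.card_eq_fintype_card, Fintype.card_perm]
    rwa [h2] at h1
  -- valuation comparison
  set V := ∑ ω : Ω, ((p ^ e ω)!).factorization p with hV
  set M := ∏ ω : Ω, (p ^ e ω)! with hM
  have hM0 : M ≠ 0 := Finset.prod_ne_zero_iff.mpr fun ω _ => Nat.factorial_ne_zero _
  have hvV : v ≤ V := by
    have h1 : p ^ v ∣ M := by
      rw [← hsyl, hM]
      convert hdvd using 2 with ω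
      rw [he ω]
    have h2 := (Nat.Prime.pow_dvd_iff_le_factorization hp hM0).mp h1
    rwa [hM, Nat.factorization_prod (fun ω _ => Nat.factorial_ne_zero _),
      Finsupp.finset_sum_apply] at h2
  have hleg : ∀ m : ℕ, (p - 1) * (m !).factorization p = m - (p.digits m).sum := by
    intro m
    rw [Nat.factorization_def _ hp]
    exact sub_one_mul_padicValNat_factorial m
  set s := (p.digits n).sum with hs
  set r := Fintype.card Ω with hr
  have key2 : (p - 1) * v + s = n := by
    rw [hv, hleg n]
    exact Nat.sub_add_cancel (Nat.digit_sum_le p n)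
  have key1 : (p - 1) * V + r = n := by
    have hterm : ∀ ω : Ω, (p - 1) * ((p ^ e ω)!).factorization p + 1 = p ^ e ω := by
      intro ω
      rw [hleg, digits_pow_sum hp]
      exact Nat.sub_add_cancel (Nat.one_le_pow _ _ hp.pos)
    calc (p - 1) * V + r
        = ∑ ω : Ω, ((p - 1) * ((p ^ e ω)!).factorization p + 1) := by
          rw [hV, Finset.mul_sum, Finset.sum_add_distrib, Finset.sum_const, Finset.card_univ]
          simp [hr]
      _ = ∑ ω : Ω, p ^ e ω := Finset.sum_congr rfl fun ω _ => hterm ω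
      _ = ∑ ω : Ω, Nat.card ω.orbit := Finset.sum_congr rfl fun ω _ => (he ω).symm
      _ = n := hsig
  have hrs : r ≤ s := by
    have h1 : (p - 1) * v + s ≤ (p - 1) * V + s :=
      Nat.add_le_add_right (Nat.mul_le_mul_left _ hvV) s
    rw [key2] at h1
    rw [← key1] at h1
    exact Nat.le_of_add_le_add_left h1
  -- the multiset of exponents
  set E : Multiset ℕ := Finset.univ.val.map e with hE
  have hEcard : Multiset.card E = r := by simp [hE, hr, Finset.card_univ]
  have hEsum : (E.map (p ^ ·)).sum = n := by
    rw [hE, Multiset.map_map]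
    have : (∑ ω : Ω, p ^ e ω) = n := by
      rw [← hsig]
      exact Finset.sum_congr rfl fun ω _ => (he ω).symm
    exact this
  obtain ⟨hge, heqc⟩ := key_multiset hp (Multiset.card E) E rfl
  rw [hEsum] at hge heqc
  have hcount := heqc (by rw [hEcard]; exact hrs)
  refine ⟨fun ω => ⟨e ω, he ω⟩, fun i => ?_⟩
  rw [← hcount i]
  have hsub : Nat.card {ω : Ω // Nat.card ω.orbit = p ^ i} = Nat.card {ω : Ω // i = e ω} := by
    refine Nat.card_congr (Equiv.subtypeEquivRight fun ω => ?_)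
    rw [he ω]
    constructor
    · intro h; exact (Nat.pow_right_injective hp.two_le h).symm
    · intro h; rw [h]
  rw [hsub, Nat.card_eq_fintype_card, Fintype.card_subtype, hE, Multiset.count_map]
  rfl
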